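/- Let F : ℝ → ℝ be nondecreasing and right-continuous and satisfy the second-order Pareto tail condition with parameters (α, ρ, c, d), define Q(q) = inf{ y ∈ ℝ : F(y) ≥ q } for q ∈ (0, 1), and define the tail quantile function U(s) = Q(1 − 1/s) for s > 1. Then for every x > 0, s^(ρ/α) · ( U(s·x)/U(s) − x^(1/α) ) → (d/α) · c^(−ρ/α) · x^(1/α) · (x^(−ρ/α) − 1) as s → ∞. (This is the second-order extended regular variation condition for U with auxiliary rate function proportional to s^(−ρ/α).) -/

import Mathlib

open Filter MeasureTheory Real Set

/-- Second-order Pareto tail condition with parameters `(α, ρ, c, d)`. -/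
def ParetoTail (F : ℝ → ℝ) (α ρ c d : ℝ) : Prop :=
  0 < α ∧ 0 < ρ ∧ 0 < c ∧
  ∃ y₀ : ℝ, 0 < y₀ ∧ ∃ e : ℝ → ℝ,
    Tendsto (fun y : ℝ => y ^ ρ * e y) atTop (nhds 0) ∧
    ∀ y : ℝ, y₀ ≤ y → 1 - F y = c * y ^ (-α) * (1 + d * y ^ (-ρ) + e y)


noncomputable def ytest (α ρ c a s : ℝ) : ℝ :=
  (c*s) ^ (1/α) * (1 + a * s ^ (-(ρ/α)))

lemma aux_rpow (α c s B q : ℝ) (hα : 0 < α) (hc : 0 < c) (hs : 0 < s) (hB : 0 ≤ B) :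
    ((c*s) ^ (1/α) * B) ^ (-q) = c ^ (-(q/α)) * s ^ (-(q/α)) * B ^ (-q) := by
  have hcs : (0:ℝ) ≤ c * s := by positivity
  rw [Real.mul_rpow (by positivity) hB, ← Real.rpow_mul hcs]
  have : 1/α * (-q) = -(q/α) := by field_simp
  rw [this, Real.mul_rpow hc.le hs.le]

lemma aux_one_add (α ρ a : ℝ) (hα : 0 < α) (hρ : 0 < ρ) :
    Tendsto (fun s : ℝ => 1 + a * s ^ (-(ρ/α))) atTop (nhds 1) := by
  have := (tendsto_rpow_neg_atTop (y := ρ/α) (by positivity)).const_mul a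
  simpa using this.const_add 1

lemma aux_ytop (α ρ c a : ℝ) (hα : 0 < α) (hρ : 0 < ρ) (hc : 0 < c) :
    Tendsto (fun s => ytest α ρ c a s) atTop atTop := by
  have h1 : Tendsto (fun s : ℝ => (c*s) ^ (1/α)) atTop atTop :=
    (tendsto_rpow_atTop (by positivity)).comp (tendsto_id.const_mul_atTop hc)
  exact h1.atTop_mul_pos one_pos (aux_one_add α ρ a hα hρ)

lemma aux_slope (α a γ : ℝ) (hγ : 0 < γ) :
    Tendsto (fun s : ℝ => s ^ γ * ((1 + a * s ^ (-γ)) ^ (-α) - 1)) atTop (nhds (-(α*a))) := by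
  have h1 : HasDerivAt (fun u : ℝ => 1 + a*u) a 0 := by
    simpa using ((hasDerivAt_id (0:ℝ)).const_mul a).const_add 1
  have h2' : HasDerivAt (fun v : ℝ => v ^ (-α)) (-α * (1:ℝ) ^ (-α - 1)) ((fun u : ℝ => 1 + a*u) 0) := by
    simpa using Real.hasDerivAt_rpow_const (p := -α) (x := 1) (Or.inl one_ne_zero)
  have hd : HasDerivAt (fun u : ℝ => (1 + a*u) ^ (-α)) (-(α*a)) 0 := by
    have := h2'.comp 0 h1
    simpa [Real.one_rpow, Function.comp_def] using this
  have hslope := hasDerivAt_iff_tendsto_slope.mp hd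
  have hcomp : Tendsto (fun s : ℝ => s ^ (-γ)) atTop (nhdsWithin 0 {(0:ℝ)}ᶜ) := by
    apply tendsto_nhdsWithin_of_tendsto_nhds_of_eventually_within _ (tendsto_rpow_neg_atTop hγ)
    filter_upwards [eventually_gt_atTop (0:ℝ)] with s hs
    exact ne_of_gt (Real.rpow_pos_of_pos hs _)
  refine (hslope.comp hcomp).congr' ?_
  filter_upwards [eventually_gt_atTop (0:ℝ)] with s hs
  have hinv : (s ^ (-γ))⁻¹ = s ^ γ := by rw [Real.rpow_neg hs.le, inv_inv]
  simp only [Function.comp, slope_def_field]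
  rw [div_eq_inv_mul]
  simp [hinv, mul_comm]

lemma aux_H (α ρ c d a : ℝ) (hα : 0 < α) (hρ : 0 < ρ) (hc : 0 < c)
    (e : ℝ → ℝ) (he : Tendsto (fun y : ℝ => y ^ ρ * e y) atTop (nhds 0)) :
    Tendsto (fun s : ℝ => s ^ (ρ/α) *
        ((1 + a * s ^ (-(ρ/α))) ^ (-α) *
          (1 + d * (ytest α ρ c a s) ^ (-ρ) + e (ytest α ρ c a s)) - 1))
      atTop (nhds (d * c ^ (-(ρ/α)) - α * a)) := by
  have hγ : 0 < ρ/α := by positivity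
  have h1t := aux_one_add α ρ a hα hρ
  have hA : Tendsto (fun s : ℝ => (1 + a * s ^ (-(ρ/α))) ^ (-α)) atTop (nhds 1) := by
    simpa using h1t.rpow_const (p := -α) (Or.inl one_ne_zero)
  have hytop := aux_ytop α ρ c a hα hρ hc
  have hrem : Tendsto (fun s : ℝ => s ^ (ρ/α) *
      (d * (ytest α ρ c a s) ^ (-ρ) + e (ytest α ρ c a s))) atTop
      (nhds (d * c ^ (-(ρ/α)))) := by
    have hBρ : Tendsto (fun s : ℝ => (1 + a * s ^ (-(ρ/α))) ^ (-ρ)) atTop (nhds 1) := by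
      simpa using h1t.rpow_const (p := -ρ) (Or.inl one_ne_zero)
    have hee : Tendsto (fun s : ℝ => (ytest α ρ c a s) ^ ρ * e (ytest α ρ c a s)) atTop (nhds 0) :=
      he.comp hytop
    have hlim : Tendsto (fun s : ℝ =>
        d * (c ^ (-(ρ/α)) * (1 + a * s ^ (-(ρ/α))) ^ (-ρ)) +
          c ^ (-(ρ/α)) * (1 + a * s ^ (-(ρ/α))) ^ (-ρ) *
            ((ytest α ρ c a s) ^ ρ * e (ytest α ρ c a s)))
        atTop (nhds (d * c ^ (-(ρ/α)))) := by
      have t1 : Tendsto (fun s : ℝ => c ^ (-(ρ/α)) * (1 + a * s ^ (-(ρ/α))) ^ (-ρ)) atTop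
          (nhds (c ^ (-(ρ/α)))) := by simpa using hBρ.const_mul (c ^ (-(ρ/α)))
      simpa using (t1.const_mul d).add (t1.mul hee)
    refine hlim.congr' ?_
    filter_upwards [eventually_gt_atTop (0:ℝ),
      h1t.eventually (lt_mem_nhds (by norm_num : (0:ℝ) < 1))] with s hs hpos
    have hyρ : (ytest α ρ c a s) ^ (-ρ)
        = c ^ (-(ρ/α)) * s ^ (-(ρ/α)) * (1 + a * s ^ (-(ρ/α))) ^ (-ρ) :=
      aux_rpow α c s _ ρ hα hc hs hpos.le
    have hy0 : 0 < ytest α ρ c a s := by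
      have : 0 < (c*s) ^ (1/α) := Real.rpow_pos_of_pos (by positivity) _
      exact mul_pos this hpos
    have hyρ' : (ytest α ρ c a s) ^ ρ
        = (c ^ (-(ρ/α)) * s ^ (-(ρ/α)) * (1 + a * s ^ (-(ρ/α))) ^ (-ρ))⁻¹ := by
      rw [← hyρ, Real.rpow_neg hy0.le, inv_inv]
    have e1 : s ^ (-(ρ/α)) = (s ^ (ρ/α))⁻¹ := Real.rpow_neg hs.le _
    have e2 : c ^ (-(ρ/α)) ≠ 0 := ne_of_gt (Real.rpow_pos_of_pos hc _)
    have e3 : (1 + a * s ^ (-(ρ/α))) ^ (-ρ) ≠ 0 := ne_of_gt (Real.rpow_pos_of_pos hpos _)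
    have e4 : s ^ (ρ/α) ≠ 0 := ne_of_gt (Real.rpow_pos_of_pos hs _)
    rw [hyρ, hyρ']
    set B := (1 + a * s ^ (-(ρ/α))) ^ (-ρ) with hB
    rw [e1]
    field_simp
  have key := (aux_slope α a (ρ/α) hγ).add (hA.mul hrem)
  have : -(α*a) + 1 * (d * c ^ (-(ρ/α))) = d * c ^ (-(ρ/α)) - α * a := by ring
  rw [this] at key
  refine key.congr (fun s => ?_)
  ring

lemma aux_SF (F : ℝ → ℝ) (α ρ c d a y₀ : ℝ) (e : ℝ → ℝ)
    (hα : 0 < α) (hρ : 0 < ρ) (hc : 0 < c)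
    (he : Tendsto (fun y : ℝ => y ^ ρ * e y) atTop (nhds 0))
    (heq : ∀ y : ℝ, y₀ ≤ y → 1 - F y = c * y ^ (-α) * (1 + d * y ^ (-ρ) + e y)) :
    Tendsto (fun s : ℝ => s ^ (ρ/α) * (s * (1 - F (ytest α ρ c a s)) - 1))
      atTop (nhds (d * c ^ (-(ρ/α)) - α * a)) := by
  refine (aux_H α ρ c d a hα hρ hc e he).congr' ?_
  filter_upwards [eventually_gt_atTop (0:ℝ),
    (aux_ytop α ρ c a hα hρ hc).eventually_ge_atTop y₀,
    (aux_one_add α ρ a hα hρ).eventually (lt_mem_nhds (by norm_num : (0:ℝ) < 1))]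
    with s hs hy₀ hpos
  rw [heq _ hy₀]
  have hyα : (ytest α ρ c a s) ^ (-α)
      = c ^ (-(α/α)) * s ^ (-(α/α)) * (1 + a * s ^ (-(ρ/α))) ^ (-α) :=
    aux_rpow α c s _ α hα hc hs hpos.le
  have h1 : α/α = 1 := div_self (ne_of_gt hα)
  rw [h1] at hyα
  rw [ytest] at hyα ⊢
  rw [hyα]
  rw [Real.rpow_neg_one, Real.rpow_neg_one]
  field_simp

lemma aux_tail0 (F : ℝ → ℝ) (α ρ c d y₀ : ℝ) (e : ℝ → ℝ)
    (hα : 0 < α) (hρ : 0 < ρ) (hc : 0 < c)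
    (he : Tendsto (fun y : ℝ => y ^ ρ * e y) atTop (nhds 0))
    (heq : ∀ y : ℝ, y₀ ≤ y → 1 - F y = c * y ^ (-α) * (1 + d * y ^ (-ρ) + e y)) :
    Tendsto (fun y : ℝ => 1 - F y) atTop (nhds 0) := by
  have he0 : Tendsto e atTop (nhds 0) := by
    have h := (tendsto_rpow_neg_atTop hρ).mul he
    rw [mul_zero] at h
    refine h.congr' ?_
    filter_upwards [eventually_gt_atTop (0:ℝ)] with y hy
    rw [← mul_assoc, ← Real.rpow_add hy]
    simp
  have hbr : Tendsto (fun y : ℝ => 1 + d * y ^ (-ρ) + e y) atTop (nhds 1) := by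
    have h1 : Tendsto (fun y : ℝ => 1 + d * y ^ (-ρ)) atTop (nhds 1) := by
      simpa using ((tendsto_rpow_neg_atTop hρ).const_mul d).const_add 1
    simpa using h1.add he0
  have hc0 : Tendsto (fun y : ℝ => c * y ^ (-α)) atTop (nhds 0) := by
    simpa using (tendsto_rpow_neg_atTop hα).const_mul c
  have := hc0.mul hbr
  rw [zero_mul] at this
  refine this.congr' ?_
  filter_upwards [eventually_ge_atTop y₀] with y hy
  exact (heq y hy).symm

lemma aux_tailpos (F : ℝ → ℝ) (α ρ c d y₀ : ℝ) (e : ℝ → ℝ)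
    (hα : 0 < α) (hρ : 0 < ρ) (hc : 0 < c)
    (he : Tendsto (fun y : ℝ => y ^ ρ * e y) atTop (nhds 0))
    (heq : ∀ y : ℝ, y₀ ≤ y → 1 - F y = c * y ^ (-α) * (1 + d * y ^ (-ρ) + e y)) :
    ∀ᶠ y in atTop, 0 < 1 - F y := by
  have he0 : Tendsto e atTop (nhds 0) := by
    have h := (tendsto_rpow_neg_atTop hρ).mul he
    rw [mul_zero] at h
    refine h.congr' ?_
    filter_upwards [eventually_gt_atTop (0:ℝ)] with y hy
    rw [← mul_assoc, ← Real.rpow_add hy]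
    simp
  have hbr : Tendsto (fun y : ℝ => 1 + d * y ^ (-ρ) + e y) atTop (nhds 1) := by
    have h1 : Tendsto (fun y : ℝ => 1 + d * y ^ (-ρ)) atTop (nhds 1) := by
      simpa using ((tendsto_rpow_neg_atTop hρ).const_mul d).const_add 1
    simpa using h1.add he0
  filter_upwards [eventually_ge_atTop y₀, eventually_gt_atTop (0:ℝ),
    hbr.eventually (lt_mem_nhds (by norm_num : (0:ℝ) < 1))] with y h0 hy hb
  rw [heq y h0]
  have : 0 < y ^ (-α) := Real.rpow_pos_of_pos hy _
  positivity

lemma aux_Ubdd (F : ℝ → ℝ) (α ρ c d y₀ : ℝ) (e : ℝ → ℝ)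
    (hα : 0 < α) (hρ : 0 < ρ) (hc : 0 < c)
    (hmono : Monotone F)
    (he : Tendsto (fun y : ℝ => y ^ ρ * e y) atTop (nhds 0))
    (heq : ∀ y : ℝ, y₀ ≤ y → 1 - F y = c * y ^ (-α) * (1 + d * y ^ (-ρ) + e y)) :
    ∀ᶠ s : ℝ in atTop, ({y : ℝ | 1 - 1 / s ≤ F y}).Nonempty ∧
      BddBelow {y : ℝ | 1 - 1 / s ≤ F y} := by
  obtain ⟨y₃, hy₃⟩ := (aux_tailpos F α ρ c d y₀ e hα hρ hc he heq).exists
  have h1s : Tendsto (fun s : ℝ => 1 / s) atTop (nhds 0) := by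
    simpa [one_div] using (tendsto_inv_atTop_zero : Tendsto (fun x : ℝ => x⁻¹) atTop (nhds 0))
  filter_upwards [eventually_gt_atTop (0:ℝ), h1s.eventually (gt_mem_nhds hy₃)] with s hs hlt
  constructor
  · obtain ⟨y, hy⟩ := ((aux_tail0 F α ρ c d y₀ e hα hρ hc he heq).eventually
      (gt_mem_nhds (by positivity : (0:ℝ) < 1/s))).exists
    exact ⟨y, by simp only [Set.mem_setOf_eq]; linarith⟩
  · refine ⟨y₃, fun z hz => ?_⟩
    by_contra h
    push_neg at h
    have hFz : F z ≤ F y₃ := hmono h.le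
    simp only [Set.mem_setOf_eq] at hz
    linarith

lemma aux_Usandwich (F : ℝ → ℝ) (α ρ c d a y₀ : ℝ) (e : ℝ → ℝ) (U : ℝ → ℝ)
    (hα : 0 < α) (hρ : 0 < ρ) (hc : 0 < c)
    (hmono : Monotone F)
    (he : Tendsto (fun y : ℝ => y ^ ρ * e y) atTop (nhds 0))
    (heq : ∀ y : ℝ, y₀ ≤ y → 1 - F y = c * y ^ (-α) * (1 + d * y ^ (-ρ) + e y))
    (hU : ∀ s : ℝ, 1 < s → U s = sInf {y : ℝ | 1 - 1 / s ≤ F y}) :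
    (d * c ^ (-(ρ/α)) - α * a < 0 → ∀ᶠ s : ℝ in atTop, U s ≤ ytest α ρ c a s) ∧
    (0 < d * c ^ (-(ρ/α)) - α * a → ∀ᶠ s : ℝ in atTop, ytest α ρ c a s ≤ U s) := by
  have hSF := aux_SF F α ρ c d a y₀ e hα hρ hc he heq
  have hbdd := aux_Ubdd F α ρ c d y₀ e hα hρ hc hmono he heq
  constructor
  · intro hneg
    filter_upwards [eventually_gt_atTop (1:ℝ), hbdd,
      hSF.eventually (gt_mem_nhds hneg)] with s hs hSB hlt
    have hs0 : (0:ℝ) < s := lt_trans one_pos hs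
    have hsγ : 0 < s ^ (ρ/α) := Real.rpow_pos_of_pos hs0 _
    have h2 : s * (1 - F (ytest α ρ c a s)) - 1 < 0 := by
      by_contra h
      push_neg at h
      nlinarith
    have hmem : ytest α ρ c a s ∈ {y : ℝ | 1 - 1/s ≤ F y} := by
      simp only [Set.mem_setOf_eq]
      have : 1 - F (ytest α ρ c a s) < 1/s := by
        rw [lt_div_iff₀ hs0]; linarith
      linarith [this]
    rw [hU s hs]
    exact csInf_le hSB.2 hmem
  · intro hpos
    filter_upwards [eventually_gt_atTop (1:ℝ), hbdd,
      hSF.eventually (lt_mem_nhds hpos)] with s hs hSB hlt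
    have hs0 : (0:ℝ) < s := lt_trans one_pos hs
    have hsγ : 0 < s ^ (ρ/α) := Real.rpow_pos_of_pos hs0 _
    have h2 : 0 < s * (1 - F (ytest α ρ c a s)) - 1 := by
      by_contra h
      push_neg at h
      nlinarith
    have hFy : F (ytest α ρ c a s) < 1 - 1/s := by
      have : 1/s < 1 - F (ytest α ρ c a s) := by
        rw [div_lt_iff₀ hs0]; linarith
      linarith
    rw [hU s hs]
    refine le_csInf hSB.1 (fun z hz => ?_)
    by_contra h
    push_neg at h
    have : F z ≤ F (ytest α ρ c a s) := hmono h.le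
    simp only [Set.mem_setOf_eq] at hz
    linarith

lemma aux_keyU (F : ℝ → ℝ) (α ρ c d y₀ : ℝ) (e : ℝ → ℝ) (U : ℝ → ℝ)
    (hα : 0 < α) (hρ : 0 < ρ) (hc : 0 < c)
    (hmono : Monotone F)
    (he : Tendsto (fun y : ℝ => y ^ ρ * e y) atTop (nhds 0))
    (heq : ∀ y : ℝ, y₀ ≤ y → 1 - F y = c * y ^ (-α) * (1 + d * y ^ (-ρ) + e y))
    (hU : ∀ s : ℝ, 1 < s → U s = sInf {y : ℝ | 1 - 1 / s ≤ F y}) :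
    Tendsto (fun s : ℝ => s ^ (ρ/α) * (U s / (c*s) ^ (1/α) - 1)) atTop
      (nhds (d / α * c ^ (-(ρ/α)))) := by
  rw [Metric.tendsto_atTop]
  intro ε hε
  set L := d / α * c ^ (-(ρ/α)) with hL
  set δ := ε/2 with hδ
  have hδ0 : 0 < δ := by positivity
  have hαL : α * L = d * c ^ (-(ρ/α)) := by
    rw [hL]; field_simp
  have hup := (aux_Usandwich F α ρ c d (L + δ) y₀ e U hα hρ hc hmono he heq hU).1
    (by nlinarith)
  have hlo := (aux_Usandwich F α ρ c d (L - δ) y₀ e U hα hρ hc hmono he heq hU).2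
    (by nlinarith)
  obtain ⟨N, hN⟩ := eventually_atTop.mp
    (hup.and (hlo.and (eventually_gt_atTop (0:ℝ))))
  refine ⟨max N 1, fun s hs => ?_⟩
  obtain ⟨h1, h2, hs0⟩ := hN s (le_trans (le_max_left _ _) hs)
  have hP : 0 < (c*s) ^ (1/α) := Real.rpow_pos_of_pos (by positivity) _
  have hsγ : 0 < s ^ (ρ/α) := Real.rpow_pos_of_pos hs0 _
  have hTt : s ^ (ρ/α) * s ^ (-(ρ/α)) = 1 := by
    rw [← Real.rpow_add hs0]; simp
  have hub : U s / (c*s) ^ (1/α) ≤ 1 + (L + δ) * s ^ (-(ρ/α)) := by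
    rw [div_le_iff₀ hP]
    rw [ytest] at h1
    linarith [h1]
  have hlb : 1 + (L - δ) * s ^ (-(ρ/α)) ≤ U s / (c*s) ^ (1/α) := by
    rw [le_div_iff₀ hP]
    rw [ytest] at h2
    linarith [h2]
  have hu := mul_le_mul_of_nonneg_left (sub_le_sub_right hub 1) hsγ.le
  have hl := mul_le_mul_of_nonneg_left (sub_le_sub_right hlb 1) hsγ.le
  have ePlus : s ^ (ρ/α) * (1 + (L + δ) * s ^ (-(ρ/α)) - 1) = L + δ := by
    linear_combination (L + δ) * hTt
  have eMinus : s ^ (ρ/α) * (1 + (L - δ) * s ^ (-(ρ/α)) - 1) = L - δ := by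
    linear_combination (L - δ) * hTt
  rw [ePlus] at hu
  rw [eMinus] at hl
  rw [Real.dist_eq]
  have : |s ^ (ρ/α) * (U s / (c*s) ^ (1/α) - 1) - L| ≤ δ :=
    abs_le.mpr ⟨by linarith, by linarith⟩
  linarith

/-- Second-order extended regular variation of the tail quantile function
`U s = Q (1 - 1/s)` where `Q q = inf {y | F y ≥ q}`: if `F` is nondecreasing,
right-continuous and satisfies the second-order Pareto tail condition, then for every
`x > 0`, `s^(ρ/α) * (U(s x)/U(s) - x^(1/α)) → (d/α) c^(-ρ/α) x^(1/α) (x^(-ρ/α) - 1)`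
as `s → ∞`. -/
theorem statement10 (F : ℝ → ℝ) (α ρ c d : ℝ) (hF : ParetoTail F α ρ c d)
    (hmono : Monotone F) (hrc : ∀ x : ℝ, ContinuousWithinAt F (Set.Ici x) x)
    (U : ℝ → ℝ) (hU : ∀ s : ℝ, 1 < s → U s = sInf {y : ℝ | 1 - 1 / s ≤ F y}) :
    ∀ x : ℝ, 0 < x →
      Tendsto (fun s : ℝ => s ^ (ρ / α) * (U (s * x) / U s - x ^ (1 / α)))
        atTop (nhds ((d / α) * c ^ (-(ρ / α)) * x ^ (1 / α) * (x ^ (-(ρ / α)) - 1))) := by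
  obtain ⟨hα, hρ, hc, y₀, hy₀, e, he, heq⟩ := hF
  intro x hx
  have hkey := aux_keyU F α ρ c d y₀ e U hα hρ hc hmono he heq hU
  have hγ : 0 < ρ/α := by positivity
  -- W s → 1
  have hW1 : Tendsto (fun s : ℝ => U s / (c*s) ^ (1/α)) atTop (nhds 1) := by
    have h0 := (tendsto_rpow_neg_atTop hγ).mul hkey
    rw [zero_mul] at h0
    have h1 := h0.const_add 1
    rw [add_zero] at h1
    refine h1.congr' ?_
    filter_upwards [eventually_gt_atTop (0:ℝ)] with s hs
    have hTt : s ^ (-(ρ/α)) * s ^ (ρ/α) = 1 := by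
      rw [← Real.rpow_add hs]; simp
    linear_combination (U s / (c*s) ^ (1/α) - 1) * hTt
  have hmulx : Tendsto (fun s : ℝ => s * x) atTop atTop :=
    tendsto_id.atTop_mul_const hx
  -- hWx : s^γ (W (s x) - 1) → x^(-γ) L
  have hWx : Tendsto (fun s : ℝ => s ^ (ρ/α) * (U (s*x) / (c*(s*x)) ^ (1/α) - 1)) atTop
      (nhds (x ^ (-(ρ/α)) * (d / α * c ^ (-(ρ/α))))) := by
    have hcomp := hkey.comp hmulx
    have h2 := hcomp.const_mul (x ^ (-(ρ/α)))
    refine h2.congr' ?_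
    filter_upwards [eventually_gt_atTop (0:ℝ)] with s hs
    have hsx : (s*x) ^ (ρ/α) = s ^ (ρ/α) * x ^ (ρ/α) := Real.mul_rpow hs.le hx.le
    have hxx : x ^ (-(ρ/α)) * x ^ (ρ/α) = 1 := by
      rw [← Real.rpow_add hx]; simp
    simp only [Function.comp]
    rw [hsx]
    linear_combination s ^ (ρ/α) * (U (s*x) / (c*(s*x)) ^ (1/α) - 1) * hxx
  -- assemble
  have hlim := ((hWx.sub hkey).const_mul (x ^ (1/α))).div hW1 one_ne_zero
  have hval : x ^ (1/α) * (x ^ (-(ρ/α)) * (d / α * c ^ (-(ρ/α))) - d / α * c ^ (-(ρ/α))) / 1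
      = (d / α) * c ^ (-(ρ / α)) * x ^ (1 / α) * (x ^ (-(ρ / α)) - 1) := by ring
  rw [hval] at hlim
  refine hlim.congr' ?_
  filter_upwards [eventually_gt_atTop (0:ℝ),
    hW1.eventually (lt_mem_nhds (by norm_num : (0:ℝ) < 1))] with s hs hWpos
  have hP : 0 < (c*s) ^ (1/α) := Real.rpow_pos_of_pos (by positivity) _
  have hUs : 0 < U s := by
    have := mul_pos hWpos hP
    rwa [div_mul_cancel₀ _ (ne_of_gt hP)] at this
  have hPx : (c*(s*x)) ^ (1/α) = (c*s) ^ (1/α) * x ^ (1/α) := by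
    rw [show c*(s*x) = (c*s)*x by ring, Real.mul_rpow (by positivity) hx.le]
  have hxβ : 0 < x ^ (1/α) := Real.rpow_pos_of_pos hx _
  simp only [Pi.div_apply]
  rw [hPx]
  field_simp
  ring
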